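/- Let a, b > 0, A = √(a² + ab), B = √(b² + ab). Let α, β ∈ ℝ satisfy (a + b)·cos(α − β) = (a − b)·cos(α + β) and sin(α − β) ≠ 0, and set P = (A cos α, B sin α), Q = (A cos β, B sin β) ∈ ℝ². Then the product of the distances from the origin O = (0,0) to the line through P and Q and to the line through Q and −P equals ab: dist(O, line(P, Q))·dist(O, line(Q, −P)) = ab. Equivalently, (A·B·|sin(α − β)|)² / (‖P − Q‖·‖P + Q‖) = ab. -/

import Mathlib

open Real

/-- For a 4-periodic billiard trajectory `P, Q, -P, -Q` in the outer of a pair of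
confocal ellipses, the product of the distances from the center to two consecutive
sides equals `ab`. Here `dist(O, line(X, Y)) = |x₁y₂ - x₂y₁| / ‖X - Y‖`. -/
theorem stmt_18 (a b : ℝ) (ha : 0 < a) (hb : 0 < b)
    (A B : ℝ) (hA : A = Real.sqrt (a ^ 2 + a * b)) (hB : B = Real.sqrt (b ^ 2 + a * b))
    (α β : ℝ)
    (hrel : (a + b) * Real.cos (α - β) = (a - b) * Real.cos (α + β))
    (hsin : Real.sin (α - β) ≠ 0)
    (P Q : EuclideanSpace ℝ (Fin 2))
    (hP : P = ![A * Real.cos α, B * Real.sin α])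
    (hQ : Q = ![A * Real.cos β, B * Real.sin β]) :
    (|P 0 * Q 1 - P 1 * Q 0| / ‖P - Q‖)
        * (|Q 0 * (-P) 1 - Q 1 * (-P) 0| / ‖Q - (-P)‖) = a * b ∧
    (A * B * |Real.sin (α - β)|) ^ 2 / (‖P - Q‖ * ‖P + Q‖) = a * b := by
  have H1 : Real.sin α ^ 2 + Real.cos α ^ 2 = 1 := Real.sin_sq_add_cos_sq α
  have H2 : Real.sin β ^ 2 + Real.cos β ^ 2 = 1 := Real.sin_sq_add_cos_sq β
  set ca := Real.cos α with hca
  set sa := Real.sin α with hsa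
  set cb := Real.cos β with hcb
  set sb := Real.sin β with hsb
  rw [Real.cos_sub, Real.cos_add] at hrel
  have H3 : b * (ca * cb) + a * (sa * sb) = 0 := by linear_combination hrel / 2
  have hSdef : Real.sin (α - β) = sa * cb - ca * sb := Real.sin_sub α β
  set S := sa * cb - ca * sb with hS
  have hSne : S ≠ 0 := hSdef ▸ hsin
  have hA2 : A ^ 2 = a ^ 2 + a * b := by
    rw [hA, Real.sq_sqrt (by positivity)]
  have hB2 : B ^ 2 = b ^ 2 + a * b := by
    rw [hB, Real.sq_sqrt (by positivity)]
  have hApos : 0 < A := by rw [hA]; positivity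
  have hBpos : 0 < B := by rw [hB]; positivity
  set N1 : ℝ := (A * ca - A * cb) ^ 2 + (B * sa - B * sb) ^ 2 with hN1def
  set N2 : ℝ := (A * ca + A * cb) ^ 2 + (B * sa + B * sb) ^ 2 with hN2def
  have n1 : ‖P - Q‖ = Real.sqrt N1 := by
    rw [EuclideanSpace.norm_eq]
    congr 1
    simp [hP, hQ, hN1def, Fin.sum_univ_two, Real.norm_eq_abs, sq_abs]
  have n2 : ‖P + Q‖ = Real.sqrt N2 := by
    rw [EuclideanSpace.norm_eq]
    congr 1
    simp [hP, hQ, hN2def, Fin.sum_univ_two, Real.norm_eq_abs, sq_abs]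
  -- key algebraic identities
  have hN1 : a ^ 2 * N1 = ((a + b) * (a - (a - b) * (ca * cb))) ^ 2 := by
    rw [hN1def]
    linear_combination (a^2*(ca-cb)^2) * hA2 + (a^2*(sa-sb)^2) * hB2
      + ((a^2-b^2)*a^2*sb^2 + a^2*(b^2+a*b)) * H1
      + ((a^2-b^2)*a^2*(1-ca^2) + a^2*(b^2+a*b)) * H2
      + ((a^2-b^2)*(2*b*(ca*cb) - (b*(ca*cb)+a*(sa*sb))) - 2*a*(b^2+a*b)) * H3
  have hN2 : a ^ 2 * N2 = ((a + b) * (a + (a - b) * (ca * cb))) ^ 2 := by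
    rw [hN2def]
    linear_combination (a^2*(ca+cb)^2) * hA2 + (a^2*(sa+sb)^2) * hB2
      + ((a^2-b^2)*a^2*sb^2 + a^2*(b^2+a*b)) * H1
      + ((a^2-b^2)*a^2*(1-ca^2) + a^2*(b^2+a*b)) * H2
      + ((a^2-b^2)*(2*b*(ca*cb) - (b*(ca*cb)+a*(sa*sb))) + 2*a*(b^2+a*b)) * H3
  have h5 : a ^ 2 * S ^ 2 = a ^ 2 - (a - b) ^ 2 * (ca * cb) ^ 2 := by
    rw [hS]
    linear_combination (-2*a*(ca*cb) + b*(ca*cb) - a*(sa*sb)) * H3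
      + (a^2*(sb^2+cb^2)) * H1 + a^2 * H2
  have key : N1 * N2 = ((a + b) ^ 2 * S ^ 2) ^ 2 := by
    have key' : a ^ 4 * (N1 * N2) = a ^ 4 * (((a + b) ^ 2 * S ^ 2) ^ 2) := by
      linear_combination (a^2*N2) * hN1 + ((a+b)*(a-(a-b)*(ca*cb)))^2 * hN2
        + (-(a+b)^4*(a^2*S^2 + (a^2-(a-b)^2*(ca*cb)^2))) * h5
    exact mul_left_cancel₀ (by positivity) key'
  have hS2 : 0 < S ^ 2 := lt_of_le_of_ne (sq_nonneg S) (Ne.symm (pow_ne_zero 2 hSne))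
  have hT : Real.sqrt N1 * Real.sqrt N2 = (a + b) ^ 2 * S ^ 2 := by
    rw [← Real.sqrt_mul (by positivity) N2, key,
      Real.sqrt_sq (by positivity)]
  have hAB : A ^ 2 * B ^ 2 = a * b * (a + b) ^ 2 := by
    rw [hA2, hB2]; ring
  have main : (A * B * |S|) ^ 2 / (‖P - Q‖ * ‖P + Q‖) = a * b := by
    rw [n1, n2, hT]
    rw [mul_pow, mul_pow, sq_abs, hAB]
    field_simp
  refine ⟨?_, by rw [hSdef]; exact main⟩
  have q1 : |P 0 * Q 1 - P 1 * Q 0| = A * B * |S| := by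
    rw [hP, hQ]
    simp only [Matrix.cons_val_zero, Matrix.cons_val_one, Matrix.head_cons]
    rw [show A * ca * (B * sb) - B * sa * (A * cb) = -(A * B * S) by rw [hS]; ring,
      abs_neg, abs_mul, abs_of_pos (by positivity : (0:ℝ) < A * B)]
  have q2 : |Q 0 * (-P) 1 - Q 1 * (-P) 0| = A * B * |S| := by
    simp only [PiLp.neg_apply, hP, hQ]
    simp only [PiLp.neg_apply, Matrix.cons_val_zero, Matrix.cons_val_one, Matrix.head_cons]
    rw [show A * cb * -(B * sa) - B * sb * -(A * ca) = -(A * B * S) by rw [hS]; ring,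
      abs_neg, abs_mul, abs_of_pos (by positivity : (0:ℝ) < A * B)]
  have q3 : ‖Q - -P‖ = ‖P + Q‖ := by rw [sub_neg_eq_add, add_comm]
  rw [q1, q2, q3, div_mul_div_comm, ← sq, main]
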